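/- Carlitz's identity: for |q| < 1 and |t| < 1, ∑_{k=0}^∞ s_k(1|q) t^k / (q;q)_k = 1/((t;q)_∞)^2, where s_k(1|q) = ∑_{j=0}^k [k choose j]_q. -/

import Mathlib

open Finset Filter Topology

/-- The Gaussian (q-)binomial coefficient, defined via the q-Pascal rule. -/
def gaussBinom (q : ℂ) : ℕ → ℕ → ℂ
  | _, 0 => 1
  | 0, _ + 1 => 0
  | n + 1, k + 1 => gaussBinom q n k + q ^ (k + 1) * gaussBinom q n (k + 1)

/-- The Rogers–Szegő polynomial `s_n(x|q)`. -/
noncomputable def rogersSzego (q x : ℂ) (n : ℕ) : ℂ :=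
  ∑ k ∈ Finset.range (n + 1), gaussBinom q n k * x ^ k

namespace CarlitzAux

noncomputable def P (q : ℂ) (n : ℕ) : ℂ := ∏ j ∈ Finset.range n, (1 - q ^ (j + 1))

lemma P_zero (q : ℂ) : P q 0 = 1 := by simp [P]

lemma P_succ (q : ℂ) (n : ℕ) : P q (n + 1) = P q n * (1 - q ^ (n + 1)) := by
  simp [P, Finset.prod_range_succ]

lemma gauss_zero (q : ℂ) (n : ℕ) : gaussBinom q n 0 = 1 := by cases n <;> rfl

lemma gauss_succ (q : ℂ) (n k : ℕ) :
    gaussBinom q (n + 1) (k + 1) = gaussBinom q n k + q ^ (k + 1) * gaussBinom q n (k + 1) := rfl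

lemma gauss_of_lt (q : ℂ) : ∀ n k, n < k → gaussBinom q n k = 0 := by
  intro n
  induction n with
  | zero => intro k hk; match k with | k + 1 => rfl
  | succ n IH =>
    intro k hk
    match k with
    | k + 1 =>
      rw [gauss_succ, IH k (by omega), IH (k + 1) (by omega)]
      ring

lemma gauss_self (q : ℂ) (n : ℕ) : gaussBinom q n n = 1 := by
  induction n with
  | zero => rfl
  | succ n IH => rw [gauss_succ, IH, gauss_of_lt q n (n + 1) (by omega)]; ring

lemma gauss_mul (q : ℂ) : ∀ n k, k ≤ n →
    gaussBinom q n k * (P q k * P q (n - k)) = P q n := by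
  intro n
  induction n with
  | zero => intro k hk; interval_cases k; simp [gauss_zero, P_zero]
  | succ n IH =>
    intro k hk
    match k with
    | 0 => simp [gauss_zero, P_zero]
    | k + 1 =>
      rcases eq_or_lt_of_le hk with h | h
      · rw [h, gauss_self, Nat.sub_self, P_zero]; ring
      · have hk' : k < n := by omega
        have h1 := IH k (by omega)
        have h2 := IH (k + 1) (by omega)
        have e1 : n + 1 - (k + 1) = n - k := by omega
        have e2 : n - k = (n - k - 1) + 1 := by omega
        have e3 : n - (k + 1) = n - k - 1 := by omega
        rw [e3, P_succ] at h2
        rw [e2, P_succ] at h1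
        have e4 : n - k - 1 + 1 = n - k := by omega
        rw [e4] at h1
        rw [gauss_succ, e1, e2, P_succ q (n - k - 1), e4, P_succ q n, P_succ q k]
        have hpow : q ^ (k + 1) * q ^ (n - k) = q ^ (n + 1) := by
          rw [← pow_add]; congr 1; omega
        linear_combination (1 - q ^ (k + 1)) * h1 + q ^ (k + 1) * (1 - q ^ (n - k)) * h2 -
          P q n * hpow

lemma one_sub_ge_exp {r x : ℝ} (hr : r < 1) (hx : 0 ≤ x) (hxr : x ≤ r) :
    Real.exp (-(x * (1 - r)⁻¹)) ≤ 1 - x := by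
  have hx1 : 0 < 1 - x := by linarith
  have h1 : x / (1 - x) + 1 ≤ Real.exp (x / (1 - x)) := by
    have := Real.add_one_le_exp (x / (1 - x)); linarith
  have h2 : (1 - x)⁻¹ ≤ Real.exp (x / (1 - x)) := by
    rw [inv_eq_one_div]
    have : 1 / (1 - x) = x / (1 - x) + 1 := by field_simp; ring
    linarith
  have h3 : x / (1 - x) ≤ x * (1 - r)⁻¹ := by
    rw [div_eq_mul_inv]
    gcongr
  calc Real.exp (-(x * (1 - r)⁻¹)) ≤ Real.exp (-(x / (1 - x))) := by
        apply Real.exp_le_exp.2; linarith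
    _ = (Real.exp (x / (1 - x)))⁻¹ := by rw [← Real.exp_neg]
    _ ≤ ((1 - x)⁻¹)⁻¹ := by
        apply inv_anti₀ (by positivity) h2
    _ = 1 - x := by rw [inv_inv]

lemma P_lower {q : ℂ} (hq : ‖q‖ < 1) :
    ∀ n, Real.exp (-(‖q‖ * (1 - ‖q‖)⁻¹ * (1 - ‖q‖)⁻¹)) ≤ ‖P q n‖ := by
  set r := ‖q‖ with hr
  have hr0 : 0 ≤ r := norm_nonneg q
  intro n
  have step1 : ∏ j ∈ range n, (1 - r ^ (j + 1)) ≤ ‖P q n‖ := by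
    rw [P, norm_prod]
    apply Finset.prod_le_prod
    · intro j _
      have : r ^ (j + 1) ≤ r := pow_le_of_le_one hr0 hq.le (by omega)
      linarith
    · intro j _
      calc 1 - r ^ (j + 1) = ‖(1 : ℂ)‖ - ‖q ^ (j + 1)‖ := by
            rw [norm_one, norm_pow]
        _ ≤ ‖1 - q ^ (j + 1)‖ := norm_sub_norm_le _ _
  have step2 : Real.exp (-(r * (1 - r)⁻¹ * (1 - r)⁻¹)) ≤ ∏ j ∈ range n, (1 - r ^ (j + 1)) := by
    calc Real.exp (-(r * (1 - r)⁻¹ * (1 - r)⁻¹))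
        ≤ Real.exp (-((∑ j ∈ range n, r ^ (j + 1)) * (1 - r)⁻¹)) := by
          apply Real.exp_le_exp.2
          have hsum : ∑ j ∈ range n, r ^ (j + 1) ≤ r * (1 - r)⁻¹ := by
            have : ∑ j ∈ range n, r ^ (j + 1) = r * ∑ j ∈ range n, r ^ j := by
              rw [Finset.mul_sum]; congr 1; ext j; ring
            rw [this]
            have hgle : ∑ j ∈ range n, r ^ j ≤ (1 - r)⁻¹ := by
              have := Summable.sum_le_tsum (range n) (fun i _ => by positivity)
                (summable_geometric_of_lt_one hr0 hq)
              rwa [tsum_geometric_of_lt_one hr0 hq] at this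
            gcongr
          have hpos : (0:ℝ) ≤ (1 - r)⁻¹ := by
            have : (0:ℝ) < 1 - r := by linarith
            positivity
          nlinarith [hsum]
      _ = ∏ j ∈ range n, Real.exp (-(r ^ (j + 1) * (1 - r)⁻¹)) := by
          rw [← Real.exp_sum]
          congr 1
          rw [Finset.sum_mul, ← Finset.sum_neg_distrib]
      _ ≤ ∏ j ∈ range n, (1 - r ^ (j + 1)) := by
          apply Finset.prod_le_prod
          · intro j _; positivity
          · intro j _
            exact one_sub_ge_exp hq (by positivity) (pow_le_of_le_one hr0 hq.le (by omega))
  linarith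

lemma one_sub_pow_ne {q : ℂ} (hq : ‖q‖ < 1) (n : ℕ) : 1 - q ^ (n + 1) ≠ 0 := by
  intro h
  have h1 : ‖q ^ (n + 1)‖ < 1 := by
    rw [norm_pow]; exact pow_lt_one₀ (norm_nonneg q) hq (by omega)
  have h2 : q ^ (n + 1) = 1 := by linear_combination -h
  rw [h2] at h1; simp at h1

lemma P_ne {q : ℂ} (hq : ‖q‖ < 1) (n : ℕ) : P q n ≠ 0 :=
  Finset.prod_ne_zero_iff.2 fun j _ => one_sub_pow_ne hq j

/-- the q-exponential sum -/
noncomputable def F (q s : ℂ) : ℂ := ∑' n, s ^ n / P q n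

lemma norm_term_le {q : ℂ} (hq : ‖q‖ < 1) (s : ℂ) (n : ℕ) :
    ‖s ^ n / P q n‖ ≤ (Real.exp (-(‖q‖ * (1 - ‖q‖)⁻¹ * (1 - ‖q‖)⁻¹)))⁻¹ * ‖s‖ ^ n := by
  rw [norm_div, norm_pow, div_eq_mul_inv, mul_comm]
  exact mul_le_mul_of_nonneg_right (inv_anti₀ (Real.exp_pos _) (P_lower hq n))
    (by positivity)

lemma summable_norm_term {q s : ℂ} (hq : ‖q‖ < 1) (hs : ‖s‖ < 1) :
    Summable fun n => ‖s ^ n / P q n‖ := by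
  apply Summable.of_nonneg_of_le (fun n => norm_nonneg _) (norm_term_le hq s)
  exact (summable_geometric_of_lt_one (norm_nonneg s) hs).mul_left _

lemma summable_term {q s : ℂ} (hq : ‖q‖ < 1) (hs : ‖s‖ < 1) :
    Summable fun n => s ^ n / P q n :=
  (summable_norm_term hq hs).of_norm

lemma F_funeq {q s : ℂ} (hq : ‖q‖ < 1) (hs : ‖s‖ < 1) :
    F q s * (1 - s) = F q (q * s) := by
  have hqs : ‖q * s‖ < 1 := by
    rw [norm_mul]
    exact lt_of_le_of_lt (mul_le_of_le_one_left (norm_nonneg s) hq.le) hs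
  have h1 : Summable fun n => s ^ n / P q n := summable_term hq hs
  have h2 : Summable fun n => (q * s) ^ n / P q n := summable_term hq hqs
  have key : F q s - F q (q * s) = s * F q s := by
    have e1 : F q s - F q (q * s) = ∑' n, (s ^ n / P q n - (q * s) ^ n / P q n) := by
      rw [F, F, (Summable.tsum_sub h1 h2).symm]
    rw [e1]
    have e2 : ∀ n : ℕ, s ^ n / P q n - (q * s) ^ n / P q n
        = s ^ n * (1 - q ^ n) / P q n := by
      intro n; rw [mul_pow]; ring
    rw [tsum_congr e2]
    have hsum3 : Summable fun n => s ^ n * (1 - q ^ n) / P q n := by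
      exact Summable.congr (h1.sub h2) e2
    rw [Summable.tsum_eq_zero_add hsum3]
    have e3 : ∀ n : ℕ, s ^ (n + 1) * (1 - q ^ (n + 1)) / P q (n + 1) = s * (s ^ n / P q n) := by
      intro n
      have hA := one_sub_pow_ne hq n
      have hB := P_ne hq n
      rw [P_succ]
      field_simp
      try ring
    rw [tsum_congr e3, tsum_mul_left]
    simp [F, P_zero]
  linear_combination key

lemma one_sub_ne {z : ℂ} (h : ‖z‖ < 1) : 1 - z ≠ 0 := by
  intro h0
  have h2 : z = 1 := by linear_combination -h0
  rw [h2] at h; simp at h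

lemma norm_aux_lt {q t : ℂ} (hq : ‖q‖ < 1) (ht : ‖t‖ < 1) (N : ℕ) : ‖q ^ N * t‖ < 1 := by
  rw [norm_mul, norm_pow]
  exact lt_of_le_of_lt
    (mul_le_of_le_one_left (norm_nonneg t) (pow_le_one₀ (norm_nonneg q) hq.le)) ht

lemma F_prod {q t : ℂ} (hq : ‖q‖ < 1) (ht : ‖t‖ < 1) (N : ℕ) :
    F q t * ∏ j ∈ range N, (1 - t * q ^ j) = F q (q ^ N * t) := by
  induction N with
  | zero => simp
  | succ N IH =>
    have hs : ‖q ^ N * t‖ < 1 := norm_aux_lt hq ht N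
    have h := F_funeq hq hs
    rw [prod_range_succ, ← mul_assoc, IH]
    have e : q ^ (N + 1) * t = q * (q ^ N * t) := by ring
    rw [e, ← h]
    congr 1
    ring

lemma hasProd_aux {q t : ℂ} (hq : ‖q‖ < 1) (ht : ‖t‖ < 1) :
    HasProd (fun j => 1 - t * q ^ j) (∏' j : ℕ, (1 - t * q ^ j)) ∧
      (∏' j : ℕ, (1 - t * q ^ j)) ≠ 0 := by
  have hfac : ∀ j : ℕ, 1 - t * q ^ j ≠ 0 := fun j => one_sub_ne (by
    rw [mul_comm]; exact norm_aux_lt hq ht j)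
  have hlog : Summable fun n : ℕ => Complex.log (1 - t * q ^ n) := by
    have hgeo : Summable fun n : ℕ => 3 / 2 * (‖t‖ * ‖q‖ ^ n) :=
      ((summable_geometric_of_lt_one (norm_nonneg q) hq).mul_left ‖t‖).mul_left (3 / 2)
    apply Summable.of_norm_bounded_eventually_nat hgeo
    have h0 : Filter.Tendsto (fun n : ℕ => ‖t‖ * ‖q‖ ^ n) atTop (𝓝 0) := by
      simpa using (tendsto_pow_atTop_nhds_zero_of_lt_one (norm_nonneg q) hq).const_mul ‖t‖
    filter_upwards [h0.eventually_le_const (by norm_num : (0:ℝ) < 1/2)] with n hn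
    have hz : ‖-(t * q ^ n)‖ ≤ 1 / 2 := by
      rwa [norm_neg, norm_mul, norm_pow]
    have := Complex.norm_log_one_add_half_le_self hz
    rw [show (1 : ℂ) + -(t * q ^ n) = 1 - t * q ^ n by ring] at this
    calc ‖Complex.log (1 - t * q ^ n)‖ ≤ 3 / 2 * ‖-(t * q ^ n)‖ := this
      _ = 3 / 2 * (‖t‖ * ‖q‖ ^ n) := by rw [norm_neg, norm_mul, norm_pow]
  constructor
  · exact (Complex.hasProd_of_hasSum_log (f := fun n => 1 - t * q ^ n)
      hfac hlog.hasSum).multipliable.hasProd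
  · have h2 := Complex.cexp_tsum_eq_tprod (f := fun n => 1 - t * q ^ n) hfac hlog
    rw [← h2]
    exact Complex.exp_ne_zero _

lemma F_sub_one_bound {q t : ℂ} (hq : ‖q‖ < 1) (ht : ‖t‖ < 1) {s : ℂ} (hst : ‖s‖ ≤ ‖t‖) :
    ‖F q s - 1‖ ≤ (Real.exp (-(‖q‖ * (1 - ‖q‖)⁻¹ * (1 - ‖q‖)⁻¹)))⁻¹ * ‖s‖ * (1 - ‖t‖)⁻¹ := by
  set c := Real.exp (-(‖q‖ * (1 - ‖q‖)⁻¹ * (1 - ‖q‖)⁻¹)) with hc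
  have hs : ‖s‖ < 1 := lt_of_le_of_lt hst ht
  have hsum := summable_term hq hs
  have e1 : F q s - 1 = ∑' n : ℕ, s ^ (n + 1) / P q (n + 1) := by
    rw [F, Summable.tsum_eq_zero_add hsum]
    simp [P_zero]
  rw [e1]
  have hgeo : HasSum (fun n : ℕ => c⁻¹ * ‖s‖ * ‖t‖ ^ n) (c⁻¹ * ‖s‖ * (1 - ‖t‖)⁻¹) :=
    (hasSum_geometric_of_lt_one (norm_nonneg t) ht).mul_left _
  apply tsum_of_norm_bounded hgeo
  intro n
  calc ‖s ^ (n + 1) / P q (n + 1)‖ ≤ c⁻¹ * ‖s‖ ^ (n + 1) := norm_term_le hq s (n + 1)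
    _ = c⁻¹ * ‖s‖ * ‖s‖ ^ n := by ring
    _ ≤ c⁻¹ * ‖s‖ * ‖t‖ ^ n := by
        have : (0:ℝ) ≤ c⁻¹ * ‖s‖ := by positivity
        exact mul_le_mul_of_nonneg_left (pow_le_pow_left₀ (norm_nonneg s) hst n) this

lemma euler {q t : ℂ} (hq : ‖q‖ < 1) (ht : ‖t‖ < 1) :
    F q t * (∏' j : ℕ, (1 - t * q ^ j)) = 1 := by
  obtain ⟨hp, hne⟩ := hasProd_aux hq ht
  have T1 : Filter.Tendsto (fun N => F q t * ∏ j ∈ range N, (1 - t * q ^ j)) atTop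
      (𝓝 (F q t * ∏' j : ℕ, (1 - t * q ^ j))) :=
    hp.tendsto_prod_nat.const_mul (F q t)
  have T1' : Filter.Tendsto (fun N => F q (q ^ N * t)) atTop
      (𝓝 (F q t * ∏' j : ℕ, (1 - t * q ^ j))) :=
    T1.congr (fun N => F_prod hq ht N)
  have T3 : Filter.Tendsto (fun N => F q (q ^ N * t)) atTop (𝓝 1) := by
    rw [tendsto_iff_norm_sub_tendsto_zero]
    set c := Real.exp (-(‖q‖ * (1 - ‖q‖)⁻¹ * (1 - ‖q‖)⁻¹)) with hc
    apply squeeze_zero (fun N => norm_nonneg _)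
      (g := fun N => c⁻¹ * (‖q‖ ^ N * ‖t‖) * (1 - ‖t‖)⁻¹)
    · intro N
      have hb := F_sub_one_bound hq ht (s := q ^ N * t)
        (by rw [norm_mul, norm_pow];
            exact mul_le_of_le_one_left (norm_nonneg t) (pow_le_one₀ (norm_nonneg q) hq.le))
      rwa [norm_mul, norm_pow] at hb
    · have : Filter.Tendsto (fun N : ℕ => ‖q‖ ^ N) atTop (𝓝 0) :=
        tendsto_pow_atTop_nhds_zero_of_lt_one (norm_nonneg q) hq
      have := ((this.mul_const ‖t‖).const_mul (c⁻¹)).mul_const ((1 - ‖t‖)⁻¹)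
      simpa using this
  have := tendsto_nhds_unique T1' T3
  exact this

lemma term_eq {q t : ℂ} (hq : ‖q‖ < 1) (k : ℕ) :
    rogersSzego q 1 k * t ^ k / P q k =
      ∑ j ∈ Finset.range (k + 1), (t ^ j / P q j) * (t ^ (k - j) / P q (k - j)) := by
  rw [rogersSzego]
  simp only [one_pow, mul_one]
  rw [Finset.sum_mul, Finset.sum_div]
  apply Finset.sum_congr rfl
  intro j hj
  have hjk : j ≤ k := by
    have := Finset.mem_range.mp hj; omega
  have h := gauss_mul q k j hjk
  have hpj := P_ne hq j
  have hpk := P_ne hq (k - j)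
  have hpkk := P_ne hq k
  have hpow : t ^ j * t ^ (k - j) = t ^ k := by
    rw [← pow_add]; congr 1; omega
  rw [div_mul_div_comm, hpow, div_eq_div_iff hpkk (mul_ne_zero hpj hpk)]
  linear_combination t ^ k * h

end CarlitzAux

open CarlitzAux in
/-- Carlitz's identity: `∑_k s_k(1|q) t^k/(q;q)_k = 1/(t;q)_∞²` for `|q|,|t| < 1`. -/
theorem carlitz_identity (q t : ℂ) (hq : ‖q‖ < 1) (ht : ‖t‖ < 1) :
    (∑' k : ℕ, rogersSzego q 1 k * t ^ k / ∏ j ∈ Finset.range k, (1 - q ^ (j + 1))) =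
      ((∏' j : ℕ, (1 - t * q ^ j)) ^ 2)⁻¹ := by
  obtain ⟨-, hne⟩ := hasProd_aux hq ht
  have hnorm : Summable fun n => ‖t ^ n / P q n‖ := summable_norm_term hq ht
  have cauchy := tsum_mul_tsum_eq_tsum_sum_range_of_summable_norm hnorm hnorm
  have he := euler hq ht
  have hF : F q t = (∏' j : ℕ, (1 - t * q ^ j))⁻¹ := by
    rw [inv_eq_one_div, eq_div_iff hne]; exact he
  calc (∑' k : ℕ, rogersSzego q 1 k * t ^ k / ∏ j ∈ Finset.range k, (1 - q ^ (j + 1)))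
      = ∑' k : ℕ, ∑ j ∈ Finset.range (k + 1), (t ^ j / P q j) * (t ^ (k - j) / P q (k - j)) :=
        tsum_congr fun k => term_eq hq k
    _ = (∑' n : ℕ, t ^ n / P q n) * (∑' n : ℕ, t ^ n / P q n) := cauchy.symm
    _ = F q t * F q t := rfl
    _ = ((∏' j : ℕ, (1 - t * q ^ j)) ^ 2)⁻¹ := by rw [hF, sq, mul_inv]
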